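/- In the symmetric group S₄, the elements w for which the right inversion set I(w) is contained in the sub-root system generated by N_Δ(w) (the simple roots in the left inversion set) are exactly: 1234, 2134, 1324, 1243, 1432, 2143, 3214, 4321. -/

import Mathlib

open Equiv

namespace A3

/-- The ambient Euclidean space of the type `A₃` root system. -/
abbrev V : Type := Fin 4 → ℝ

/-- The standard basis vector `εᵢ`. -/
def e (i : Fin 4) : V := fun j => if j = i then 1 else 0

/-- The root `εᵢ - εⱼ`. -/
def rt (i j : Fin 4) : V := e i - e j

/-- The type `A₃` root system `Φ = {εᵢ - εⱼ : i ≠ j}`. -/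
def Φ : Set V := {x | ∃ i j : Fin 4, i ≠ j ∧ x = rt i j}

/-- The positive roots `Φ⁺ = {εᵢ - εⱼ : i < j}`. -/
def Pos : Set V := {x | ∃ i j : Fin 4, i < j ∧ x = rt i j}

/-- The negative roots `Φ⁻ = -Φ⁺`. -/
def NegR : Set V := {x | ∃ i j : Fin 4, i < j ∧ x = rt j i}

/-- The action of `S₄` on `V` by permutation of coordinates; it sends `εᵢ` to `ε_{w i}`. -/
def act (w : Perm (Fin 4)) (x : V) : V := x ∘ w.symm

/-- The simple roots `α₁, α₂, α₃`. -/
def a1 : V := rt 0 1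
def a2 : V := rt 1 2
def a3 : V := rt 2 3

/-- The left inversion set `N(w) = Φ⁺ ∩ w(Φ⁻)`. -/
def N (w : Perm (Fin 4)) : Set V := Pos ∩ (act w '' NegR)

/-- The right inversion set `I(w) = Φ⁺ ∩ w⁻¹(Φ⁻)`. -/
def I (w : Perm (Fin 4)) : Set V := Pos ∩ (act w⁻¹ '' NegR)

/-- A subset of `Φ⁺` is closed if stable under sums that are roots. -/
def Closed (A : Set V) : Prop := ∀ x ∈ A, ∀ y ∈ A, x + y ∈ Φ → x + y ∈ A

end A3

namespace A3

/-- The set of simple roots `Δ`. -/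
def Δ : Set V := {a1, a2, a3}

/-- `N_Δ(w) = Δ ∩ N(w)`. -/
def NΔ (w : Perm (Fin 4)) : Set V := Δ ∩ N w

/-- The sub-root system `Φ_K` spanned by a set `K` of simple roots. -/
def subSystem (K : Set V) : Set V := Φ ∩ (Submodule.span ℝ K : Set V)

/-- Permutations of `S₄` in one-line notation. -/
def p1234 : Perm (Fin 4) := 1
def p2134 : Perm (Fin 4) := ⟨![1, 0, 2, 3], ![1, 0, 2, 3], by decide, by decide⟩
def p1324 : Perm (Fin 4) := ⟨![0, 2, 1, 3], ![0, 2, 1, 3], by decide, by decide⟩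
def p1243 : Perm (Fin 4) := ⟨![0, 1, 3, 2], ![0, 1, 3, 2], by decide, by decide⟩
def p1432 : Perm (Fin 4) := ⟨![0, 3, 2, 1], ![0, 3, 2, 1], by decide, by decide⟩
def p2143 : Perm (Fin 4) := ⟨![1, 0, 3, 2], ![1, 0, 3, 2], by decide, by decide⟩
def p3214 : Perm (Fin 4) := ⟨![2, 1, 0, 3], ![2, 1, 0, 3], by decide, by decide⟩
def p4321 : Perm (Fin 4) := ⟨![3, 2, 1, 0], ![3, 2, 1, 0], by decide, by decide⟩

/-! ### Auxiliary lemmas -/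

lemma rt_inj {i j k l : Fin 4} (hij : i ≠ j) (hkl : k ≠ l) (h : rt i j = rt k l) :
    i = k ∧ j = l := by
  have hi := congrFun h i
  have hj := congrFun h j
  simp only [rt, e, Pi.sub_apply] at hi hj
  split_ifs at hi hj <;> simp_all <;> norm_num at *

lemma act_rt (w : Perm (Fin 4)) (i j : Fin 4) : act w (rt i j) = rt (w i) (w j) := by
  funext k
  simp only [act, rt, e, Function.comp_apply, Pi.sub_apply, Equiv.symm_apply_eq]

lemma mem_I (w : Perm (Fin 4)) (x : V) :
    x ∈ I w ↔ ∃ i j : Fin 4, i < j ∧ w j < w i ∧ x = rt i j := by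
  constructor
  · rintro ⟨⟨i, j, hij, rfl⟩, y, ⟨p, q, hpq, rfl⟩, hy⟩
    rw [act_rt] at hy
    obtain ⟨h1, h2⟩ := rt_inj (by
      intro h; exact absurd (w⁻¹.injective h) (ne_of_lt hpq).symm) (ne_of_lt hij) hy
    refine ⟨i, j, hij, ?_, rfl⟩
    rw [← h1, ← h2]
    simp only [Perm.inv_def, Equiv.apply_symm_apply]
    exact hpq
  · rintro ⟨i, j, hij, hw, rfl⟩
    refine ⟨⟨i, j, hij, rfl⟩, rt (w i) (w j), ⟨w j, w i, hw, rfl⟩, ?_⟩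
    rw [act_rt]
    simp

lemma N_eq (w : Perm (Fin 4)) : N w = I w⁻¹ := by rw [I, inv_inv]; rfl

lemma a1_mem_N (w : Perm (Fin 4)) : a1 ∈ N w ↔ w⁻¹ 1 < w⁻¹ 0 := by
  rw [N_eq, mem_I]
  constructor
  · rintro ⟨i, j, hij, hw, h⟩
    obtain ⟨h1, h2⟩ := rt_inj (show (0 : Fin 4) ≠ 1 by decide) (ne_of_lt hij) h
    rw [h1, h2]; exact hw
  · intro h; exact ⟨0, 1, by decide, h, rfl⟩

lemma a2_mem_N (w : Perm (Fin 4)) : a2 ∈ N w ↔ w⁻¹ 2 < w⁻¹ 1 := by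
  rw [N_eq, mem_I]
  constructor
  · rintro ⟨i, j, hij, hw, h⟩
    obtain ⟨h1, h2⟩ := rt_inj (show (1 : Fin 4) ≠ 2 by decide) (ne_of_lt hij) h
    rw [h1, h2]; exact hw
  · intro h; exact ⟨1, 2, by decide, h, rfl⟩

lemma a3_mem_N (w : Perm (Fin 4)) : a3 ∈ N w ↔ w⁻¹ 3 < w⁻¹ 2 := by
  rw [N_eq, mem_I]
  constructor
  · rintro ⟨i, j, hij, hw, h⟩
    obtain ⟨h1, h2⟩ := rt_inj (show (2 : Fin 4) ≠ 3 by decide) (ne_of_lt hij) h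
    rw [h1, h2]; exact hw
  · intro h; exact ⟨2, 3, by decide, h, rfl⟩

lemma a1_mem_NΔ (w : Perm (Fin 4)) : a1 ∈ NΔ w ↔ w⁻¹ 1 < w⁻¹ 0 :=
  ⟨fun h => (a1_mem_N w).1 h.2, fun h => ⟨Or.inl rfl, (a1_mem_N w).2 h⟩⟩

lemma a2_mem_NΔ (w : Perm (Fin 4)) : a2 ∈ NΔ w ↔ w⁻¹ 2 < w⁻¹ 1 :=
  ⟨fun h => (a2_mem_N w).1 h.2, fun h => ⟨Or.inr (Or.inl rfl), (a2_mem_N w).2 h⟩⟩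

lemma a3_mem_NΔ (w : Perm (Fin 4)) : a3 ∈ NΔ w ↔ w⁻¹ 3 < w⁻¹ 2 :=
  ⟨fun h => (a3_mem_N w).1 h.2, fun h => ⟨Or.inr (Or.inr rfl), (a3_mem_N w).2 h⟩⟩

noncomputable def f1 : V →ₗ[ℝ] ℝ := LinearMap.proj 0
noncomputable def f2 : V →ₗ[ℝ] ℝ := (LinearMap.proj 0 : V →ₗ[ℝ] ℝ) + LinearMap.proj 1
noncomputable def f3 : V →ₗ[ℝ] ℝ :=
  (LinearMap.proj 0 : V →ₗ[ℝ] ℝ) + LinearMap.proj 1 + LinearMap.proj 2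

lemma f1_rt (i j : Fin 4) : f1 (rt i j) = (rt i j) 0 := rfl
lemma f2_rt (i j : Fin 4) : f2 (rt i j) = (rt i j) 0 + (rt i j) 1 := rfl
lemma f3_rt (i j : Fin 4) : f3 (rt i j) = (rt i j) 0 + (rt i j) 1 + (rt i j) 2 := rfl

lemma mem_Δ {v : V} (h : v ∈ Δ) : v = a1 ∨ v = a2 ∨ v = a3 := h

lemma span_char {K : Set V} (hK : K ⊆ Δ) {i j : Fin 4} (hij : i < j) :
    rt i j ∈ Submodule.span ℝ K ↔
      ((i = 0 → a1 ∈ K) ∧ ((i ≤ 1 ∧ 2 ≤ j) → a2 ∈ K) ∧ (j = 3 → a3 ∈ K)) := by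
  constructor
  · intro hmem
    refine ⟨?_, ?_, ?_⟩
    · intro hi
      by_contra ha
      have hker : Submodule.span ℝ K ≤ LinearMap.ker f1 := by
        rw [Submodule.span_le]
        intro v hv
        rcases mem_Δ (hK hv) with h | h | h
        · exact absurd (h ▸ hv) ha
        · subst h; simp [LinearMap.mem_ker, f1, a2, rt, e]
        · subst h; simp [LinearMap.mem_ker, f1, a3, rt, e]
      have h0 := hker hmem
      rw [LinearMap.mem_ker, f1_rt] at h0
      subst hi
      fin_cases j <;> simp_all [rt, e]
    · rintro ⟨hi, hj⟩
      by_contra ha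
      have hker : Submodule.span ℝ K ≤ LinearMap.ker f2 := by
        rw [Submodule.span_le]
        intro v hv
        rcases mem_Δ (hK hv) with h | h | h
        · subst h; simp [LinearMap.mem_ker, f2, a1, rt, e]
        · exact absurd (h ▸ hv) ha
        · subst h; simp [LinearMap.mem_ker, f2, a3, rt, e]
      have h0 := hker hmem
      rw [LinearMap.mem_ker, f2_rt] at h0
      fin_cases i <;> fin_cases j <;> simp_all [rt, e]
    · intro hj
      by_contra ha
      have hker : Submodule.span ℝ K ≤ LinearMap.ker f3 := by
        rw [Submodule.span_le]
        intro v hv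
        rcases mem_Δ (hK hv) with h | h | h
        · subst h; simp [LinearMap.mem_ker, f3, a1, rt, e]
        · subst h; simp [LinearMap.mem_ker, f3, a2, rt, e]
        · exact absurd (h ▸ hv) ha
      have h0 := hker hmem
      rw [LinearMap.mem_ker, f3_rt] at h0
      subst hj
      fin_cases i <;> simp_all [rt, e]
  · rintro ⟨h1, h2, h3⟩
    have e01 : rt 0 1 = a1 := rfl
    have e12 : rt 1 2 = a2 := rfl
    have e23 : rt 2 3 = a3 := rfl
    have e02 : rt 0 2 = a1 + a2 := by
      funext k; fin_cases k <;> simp [rt, e, a1, a2] <;> ring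
    have e13 : rt 1 3 = a2 + a3 := by
      funext k; fin_cases k <;> simp [rt, e, a2, a3] <;> ring
    have e03 : rt 0 3 = a1 + a2 + a3 := by
      funext k; fin_cases k <;> simp [rt, e, a1, a2, a3] <;> ring
    have hs : ∀ v ∈ K, v ∈ Submodule.span ℝ K := fun v hv => Submodule.subset_span hv
    fin_cases i <;> fin_cases j <;> simp_all <;>
      first
        | exact hs _ h1
        | exact hs _ h2
        | exact hs _ h3
        | exact Submodule.add_mem _ (hs _ h1) (hs _ h2)
        | exact Submodule.add_mem _ (hs _ h2) (hs _ h3)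
        | exact Submodule.add_mem _ (Submodule.add_mem _ (hs _ h1) (hs _ h2)) (hs _ h3)

lemma key (w : Perm (Fin 4)) :
    I w ⊆ subSystem (NΔ w) ↔
      ∀ i j : Fin 4, i < j → w j < w i →
        ((i = 0 → w⁻¹ 1 < w⁻¹ 0) ∧ ((i ≤ 1 ∧ 2 ≤ j) → w⁻¹ 2 < w⁻¹ 1) ∧
          (j = 3 → w⁻¹ 3 < w⁻¹ 2)) := by
  have hK : NΔ w ⊆ Δ := Set.inter_subset_left
  constructor
  · intro h i j hij hw
    have hm := h ((mem_I w _).2 ⟨i, j, hij, hw, rfl⟩)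
    have hsp : rt i j ∈ Submodule.span ℝ (NΔ w) := hm.2
    rw [span_char hK hij] at hsp
    exact ⟨fun h0 => (a1_mem_NΔ w).1 (hsp.1 h0),
           fun h0 => (a2_mem_NΔ w).1 (hsp.2.1 h0),
           fun h0 => (a3_mem_NΔ w).1 (hsp.2.2 h0)⟩
  · intro h x hx
    obtain ⟨i, j, hij, hw, rfl⟩ := (mem_I w x).1 hx
    refine ⟨⟨i, j, ne_of_lt hij, rfl⟩, ?_⟩
    show rt i j ∈ Submodule.span ℝ (NΔ w)
    rw [span_char hK hij]
    obtain ⟨h1, h2, h3⟩ := h i j hij hw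
    exact ⟨fun h0 => (a1_mem_NΔ w).2 (h1 h0),
           fun h0 => (a2_mem_NΔ w).2 (h2 h0),
           fun h0 => (a3_mem_NΔ w).2 (h3 h0)⟩

/-- the elements `w ∈ S₄` with `I(w) ⊆ Φ_{N_Δ(w)}` are exactly
`1234, 2134, 1324, 1243, 1432, 2143, 3214, 4321`. -/
theorem I_subset_subSystem_iff :
    {w : Perm (Fin 4) | I w ⊆ subSystem (NΔ w)} =
      {p1234, p2134, p1324, p1243, p1432, p2143, p3214, p4321} := by
  ext w
  simp only [Set.mem_setOf_eq, Set.mem_insert_iff, Set.mem_singleton_iff]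
  rw [key w]
  revert w
  decide

end A3
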